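/- arXiv:2409.18504 — 2 statements merged into one kernel-verified Lean document; each statement's English description precedes it below -/
import Mathlib

section
/- Let X = {x_1,...,x_N} in R^d with N = K*c, let P be an optimal balanced K-means partition (minimizing sum over p of Var(X_p) over all partitions of [N] into K groups of size c), and let Q be any partition in Q(P) (formed by selecting one point from each group of P for each group of Q). Then the Wasserstein barycenter of the empirical measures {X_q : q in Q} with uniform weights equals the uniform empirical measure on the centroids {E(X_p) : p in P}; that is, W_2(bar{X}_Q, E(X_P)) = 0. -/
open Finset

noncomputable def emean {d : ℕ} {ι : Type*} [Fintype ι] (s : Finset ι)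
    (x : ι → EuclideanSpace ℝ (Fin d)) : EuclideanSpace ℝ (Fin d) :=
  (s.card : ℝ)⁻¹ • ∑ i ∈ s, x i

noncomputable def evar {d : ℕ} {ι : Type*} [Fintype ι] (s : Finset ι)
    (x : ι → EuclideanSpace ℝ (Fin d)) : ℝ :=
  (s.card : ℝ)⁻¹ * ∑ i ∈ s, ‖x i - emean s x‖ ^ 2

/-- The group of index `k` in the partition encoded by `P`. -/
def grp {N K : ℕ} (P : Fin N → Fin K) (k : Fin K) : Finset (Fin N) :=
  Finset.univ.filter (fun i => P i = k)

/-- Squared Wasserstein-2 distance between the uniform empirical measures on the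
points `x i, i ∈ s` and `y j, j ∈ t`, as an infimum over couplings. -/
noncomputable def W2sq {d : ℕ} {ι κ : Type*} [Fintype ι] [Fintype κ]
    (s : Finset ι) (x : ι → EuclideanSpace ℝ (Fin d))
    (t : Finset κ) (y : κ → EuclideanSpace ℝ (Fin d)) : ℝ :=
  sInf { C | ∃ π : ι → κ → ℝ, (∀ i j, 0 ≤ π i j) ∧
    (∀ i ∈ s, ∑ j ∈ t, π i j = (s.card : ℝ)⁻¹) ∧
    (∀ j ∈ t, ∑ i ∈ s, π i j = (t.card : ℝ)⁻¹) ∧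
    C = ∑ i ∈ s, ∑ j ∈ t, π i j * ‖x i - y j‖ ^ 2 }

/-- `Q` is a selection partition from `P`: every group of `Q` contains exactly one
point of every group of `P`. -/
def Selection {N K c : ℕ} (P : Fin N → Fin K) (Q : Fin N → Fin c) : Prop :=
  ∀ j k, (Finset.univ.filter (fun i => Q i = j ∧ P i = k)).card = 1

/-- `b` is a (uniform-weight) Wasserstein barycenter of the empirical measures of the
groups of `Q`, among uniform empirical measures on `m` points. -/
def IsBary {d N c m : ℕ} (x : Fin N → EuclideanSpace ℝ (Fin d)) (Q : Fin N → Fin c)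
    (b : Fin m → EuclideanSpace ℝ (Fin d)) : Prop :=
  ∀ b' : Fin m → EuclideanSpace ℝ (Fin d),
    ∑ j, W2sq (grp Q j) x Finset.univ b ≤ ∑ j, W2sq (grp Q j) x Finset.univ b'

/-! ### Auxiliary lemmas -/

lemma sum_sub_emean {d : ℕ} {ι : Type*} [Fintype ι] (s : Finset ι)
    (x : ι → EuclideanSpace ℝ (Fin d)) :
    ∑ i ∈ s, (x i - emean s x) = 0 := by
  rcases s.eq_empty_or_nonempty with h | h
  · simp [h]
  · have hcard : (s.card : ℝ) ≠ 0 := by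
      exact_mod_cast (Finset.card_pos.mpr h).ne'
    rw [Finset.sum_sub_distrib, Finset.sum_const, emean,
      ← Nat.cast_smul_eq_nsmul ℝ, smul_smul,
      mul_inv_cancel₀ hcard, one_smul, sub_self]

lemma sum_sq_emean_le {d : ℕ} {ι : Type*} [Fintype ι] (s : Finset ι)
    (x : ι → EuclideanSpace ℝ (Fin d)) (y : EuclideanSpace ℝ (Fin d)) :
    ∑ i ∈ s, ‖x i - emean s x‖ ^ 2 ≤ ∑ i ∈ s, ‖x i - y‖ ^ 2 := by
  set μ := emean s x with hμ
  have key : ∀ i, ‖x i - y‖ ^ 2 =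
      ‖x i - μ‖ ^ 2 + 2 * inner ℝ (x i - μ) (μ - y) + ‖μ - y‖ ^ 2 := by
    intro i
    rw [show x i - y = (x i - μ) + (μ - y) by abel, norm_add_sq_real]
  calc ∑ i ∈ s, ‖x i - μ‖ ^ 2
      ≤ ∑ i ∈ s, ‖x i - μ‖ ^ 2 + (2 * inner ℝ (∑ i ∈ s, (x i - μ)) (μ - y)
          + s.card * ‖μ - y‖ ^ 2) := by
        rw [sum_sub_emean]
        have : (0:ℝ) ≤ s.card * ‖μ - y‖ ^ 2 := by positivity
        simp only [inner_zero_left, mul_zero, zero_add]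
        linarith
    _ = ∑ i ∈ s, ‖x i - y‖ ^ 2 := by
        simp only [key, Finset.sum_add_distrib, Finset.sum_const, nsmul_eq_mul]
        rw [sum_inner, Finset.mul_sum]; ring

/-- The coupling set defining `W2sq`. -/
def W2set {d : ℕ} {ι κ : Type*} [Fintype ι] [Fintype κ]
    (s : Finset ι) (x : ι → EuclideanSpace ℝ (Fin d))
    (t : Finset κ) (y : κ → EuclideanSpace ℝ (Fin d)) : Set ℝ :=
  { C | ∃ π : ι → κ → ℝ, (∀ i j, 0 ≤ π i j) ∧
    (∀ i ∈ s, ∑ j ∈ t, π i j = (s.card : ℝ)⁻¹) ∧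
    (∀ j ∈ t, ∑ i ∈ s, π i j = (t.card : ℝ)⁻¹) ∧
    C = ∑ i ∈ s, ∑ j ∈ t, π i j * ‖x i - y j‖ ^ 2 }

lemma W2sq_eq {d : ℕ} {ι κ : Type*} [Fintype ι] [Fintype κ]
    (s : Finset ι) (x : ι → EuclideanSpace ℝ (Fin d))
    (t : Finset κ) (y : κ → EuclideanSpace ℝ (Fin d)) :
    W2sq s x t y = sInf (W2set s x t y) := rfl

lemma W2set_bddBelow {d : ℕ} {ι κ : Type*} [Fintype ι] [Fintype κ]
    (s : Finset ι) (x : ι → EuclideanSpace ℝ (Fin d))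
    (t : Finset κ) (y : κ → EuclideanSpace ℝ (Fin d)) :
    BddBelow (W2set s x t y) := by
  refine ⟨0, fun C hC => ?_⟩
  obtain ⟨π, hpos, -, -, rfl⟩ := hC
  exact Finset.sum_nonneg fun i _ => Finset.sum_nonneg fun j _ =>
    mul_nonneg (hpos i j) (by positivity)

lemma W2set_nonempty {d : ℕ} {ι κ : Type*} [Fintype ι] [Fintype κ]
    (s : Finset ι) (x : ι → EuclideanSpace ℝ (Fin d))
    (t : Finset κ) (y : κ → EuclideanSpace ℝ (Fin d))
    (hs : s.Nonempty) (ht : t.Nonempty) :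
    (W2set s x t y).Nonempty := by
  have hsc : (s.card : ℝ) ≠ 0 := by exact_mod_cast (Finset.card_pos.mpr hs).ne'
  have htc : (t.card : ℝ) ≠ 0 := by exact_mod_cast (Finset.card_pos.mpr ht).ne'
  refine ⟨_, (fun _ _ => (s.card : ℝ)⁻¹ * (t.card : ℝ)⁻¹), fun i j => by positivity,
    fun i _ => ?_, fun j _ => ?_, rfl⟩
  · rw [Finset.sum_const, nsmul_eq_mul, ← mul_assoc, mul_comm (t.card:ℝ),
      mul_assoc, mul_inv_cancel₀ htc, mul_one]
  · rw [Finset.sum_const, nsmul_eq_mul, ← mul_assoc, mul_inv_cancel₀ hsc, one_mul]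

lemma W2sq_le_cost {d : ℕ} {ι κ : Type*} [Fintype ι] [Fintype κ]
    (s : Finset ι) (x : ι → EuclideanSpace ℝ (Fin d))
    (t : Finset κ) (y : κ → EuclideanSpace ℝ (Fin d))
    (π : ι → κ → ℝ) (hpos : ∀ i j, 0 ≤ π i j)
    (hrow : ∀ i ∈ s, ∑ j ∈ t, π i j = (s.card : ℝ)⁻¹)
    (hcol : ∀ j ∈ t, ∑ i ∈ s, π i j = (t.card : ℝ)⁻¹) :
    W2sq s x t y ≤ ∑ i ∈ s, ∑ j ∈ t, π i j * ‖x i - y j‖ ^ 2 :=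
  csInf_le (W2set_bddBelow s x t y) ⟨π, hpos, hrow, hcol, rfl⟩

lemma le_W2sq {d : ℕ} {ι κ : Type*} [Fintype ι] [Fintype κ]
    (s : Finset ι) (x : ι → EuclideanSpace ℝ (Fin d))
    (t : Finset κ) (y : κ → EuclideanSpace ℝ (Fin d))
    (hs : s.Nonempty) (ht : t.Nonempty) (L : ℝ)
    (h : ∀ C ∈ W2set s x t y, L ≤ C) :
    L ≤ W2sq s x t y :=
  le_csInf (W2set_nonempty s x t y hs ht) h

/-- if `P` is an optimal balanced K-means partition of `[N]` (`N = K*c`)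
into `K` groups of size `c`, and `Q ∈ Q(P)` selects one point per group of `P`, then the
uniform empirical measure on the centroids `E(X_p)` is a Wasserstein barycenter of the
subgroup measures `{X_q : q ∈ Q}`, i.e. `W₂(bar X_Q, E(X_P)) = 0`. -/
theorem barycenter_of_selection_eq_centroids {d N K c : ℕ}
    (hK : 0 < K) (hc : 0 < c) (hN : N = K * c)
    (x : Fin N → EuclideanSpace ℝ (Fin d)) (P : Fin N → Fin K)
    (hPbal : ∀ k, (grp P k).card = c)
    (hPopt : ∀ P' : Fin N → Fin K, (∀ k, (grp P' k).card = c) →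
      ∑ k, evar (grp P k) x ≤ ∑ k, evar (grp P' k) x)
    (Q : Fin N → Fin c) (hQ : Selection P Q) :
    IsBary x Q (fun k => emean (grp P k) x) := by
  intro b'
  classical
  have hKr : ((K:ℝ)) ≠ 0 := by exact_mod_cast hK.ne'
  have hcr : ((c:ℝ)) ≠ 0 := by exact_mod_cast hc.ne'
  set m : Fin K → EuclideanSpace ℝ (Fin d) := fun k => emean (grp P k) x with hm
  -- the selected element of group `k` of `P` inside group `j` of `Q`
  have hsel : ∀ j k, ∃ i : Fin N,
      (Finset.univ.filter (fun i => Q i = j ∧ P i = k)) = {i} :=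
    fun j k => Finset.card_eq_one.mp (hQ j k)
  set e : Fin c → Fin K → Fin N := fun j k => (hsel j k).choose with he
  have hefil : ∀ j k, (Finset.univ.filter (fun i => Q i = j ∧ P i = k)) = {e j k} :=
    fun j k => (hsel j k).choose_spec
  have heQ : ∀ j k, Q (e j k) = j ∧ P (e j k) = k := by
    intro j k
    have : e j k ∈ Finset.univ.filter (fun i => Q i = j ∧ P i = k) := by
      rw [hefil j k]; exact Finset.mem_singleton_self _
    simpa using this
  have heunique : ∀ j k i, Q i = j → P i = k → i = e j k := by
    intro j k i h1 h2
    have : i ∈ Finset.univ.filter (fun i => Q i = j ∧ P i = k) := by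
      simp [h1, h2]
    rwa [hefil j k, Finset.mem_singleton] at this
  -- card of each group of Q is K
  have hQcard : ∀ j, (grp Q j).card = K := by
    intro j
    rw [grp, Finset.card_eq_sum_card_fiberwise (f := P) (t := Finset.univ)
      (fun i _ => Finset.mem_univ _)]
    have : ∀ k, ((Finset.univ.filter (fun i => Q i = j)).filter
        (fun i => P i = k)).card = 1 := by
      intro k
      rw [Finset.filter_filter]
      exact hQ j k
    simp [this]
  have hQne : ∀ j, (grp Q j).Nonempty := by
    intro j
    rw [← Finset.card_pos, hQcard j]; exact hK
  have hKuniv : (Finset.univ : Finset (Fin K)).card = K := by simp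
  have hKune : (Finset.univ : Finset (Fin K)).Nonempty := by
    rw [← Finset.card_pos, hKuniv]; exact hK
  -- key: total variance quantity
  -- A := ∑ i, ‖x i - m (P i)‖²
  -- Step 1: fiberwise sum over Q
  have hfibQ : ∀ (f : Fin N → ℝ), ∑ j, ∑ i ∈ grp Q j, f i = ∑ i, f i := by
    intro f
    rw [show (∑ j, ∑ i ∈ grp Q j, f i) =
      ∑ j ∈ Finset.univ, ∑ i ∈ Finset.univ.filter (fun i => Q i = j), f i from rfl,
      Finset.sum_fiberwise_eq_sum_filter]
    simp
  have hfibP : ∀ (P'' : Fin N → Fin K) (f : Fin N → ℝ),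
      ∑ k, ∑ i ∈ grp P'' k, f i = ∑ i, f i := by
    intro P'' f
    rw [show (∑ k, ∑ i ∈ grp P'' k, f i) =
      ∑ k ∈ Finset.univ, ∑ i ∈ Finset.univ.filter (fun i => P'' i = k), f i from rfl,
      Finset.sum_fiberwise_eq_sum_filter]
    simp
  -- sum over a group of Q via the selection bijection
  have hgrpsum : ∀ (j : Fin c) (f : Fin N → ℝ),
      ∑ i ∈ grp Q j, f i = ∑ k, f (e j k) := by
    intro j f
    have himg : grp Q j = Finset.univ.image (e j) := by
      ext i
      simp only [grp, Finset.mem_filter, Finset.mem_image, Finset.mem_univ, true_and]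
      constructor
      · intro hQi
        exact ⟨P i, (heunique j (P i) i hQi rfl).symm⟩
      · rintro ⟨k, rfl⟩
        exact (heQ j k).1
    have heinj : ∀ k ∈ (Finset.univ : Finset (Fin K)),
        ∀ k' ∈ (Finset.univ : Finset (Fin K)), e j k = e j k' → k = k' := by
      intro k _ k' _ hkk
      rw [← (heQ j k).2, hkk, (heQ j k').2]
    rw [himg, Finset.sum_image heinj]
  -- evar sums
  have hvar : ∀ (P'' : Fin N → Fin K), (∀ k, (grp P'' k).card = c) →
      ∑ i, ‖x i - emean (grp P'' (P'' i)) x‖ ^ 2 = c * ∑ k, evar (grp P'' k) x := by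
    intro P'' hbal
    rw [← hfibP P'']
    rw [Finset.mul_sum]
    refine Finset.sum_congr rfl fun k _ => ?_
    rw [evar, hbal k, ← mul_assoc, mul_inv_cancel₀ hcr, one_mul]
    refine Finset.sum_congr rfl fun i hi => ?_
    simp only [grp, Finset.mem_filter] at hi
    rw [hi.2]
  -- UPPER BOUND
  have upper : ∑ j, W2sq (grp Q j) x Finset.univ m
      ≤ (K:ℝ)⁻¹ * (c * ∑ k, evar (grp P k) x) := by
    have hA : ∑ i, ‖x i - m (P i)‖ ^ 2 = c * ∑ k, evar (grp P k) x := hvar P hPbal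
    rw [← hA, ← hfibQ (fun i => ‖x i - m (P i)‖ ^ 2), Finset.mul_sum]
    refine Finset.sum_le_sum fun j _ => ?_
    -- coupling sending each point to its P-centroid
    set π : Fin N → Fin K → ℝ :=
      fun i k => if Q i = j ∧ P i = k then (K:ℝ)⁻¹ else 0 with hπ
    have hpos : ∀ i k, 0 ≤ π i k := by
      intro i k; rw [hπ]; dsimp only; split <;> positivity
    have hrow : ∀ i ∈ grp Q j, ∑ k, π i k = ((grp Q j).card : ℝ)⁻¹ := by
      intro i hi
      simp only [grp, Finset.mem_filter] at hi
      rw [hQcard j, hπ]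
      simp [hi.2]
    have hcol : ∀ k ∈ (Finset.univ : Finset (Fin K)),
        ∑ i ∈ grp Q j, π i k = ((Finset.univ : Finset (Fin K)).card : ℝ)⁻¹ := by
      intro k _
      rw [hKuniv, hπ]
      rw [hgrpsum j]
      have : ∀ k' : Fin K, (if Q (e j k') = j ∧ P (e j k') = k then (K:ℝ)⁻¹ else 0)
          = if k' = k then (K:ℝ)⁻¹ else 0 := by
        intro k'
        rcases heQ j k' with ⟨h1, h2⟩
        by_cases hkk : k' = k
        · subst hkk; simp [h1, h2]
        · have : ¬ (Q (e j k') = j ∧ P (e j k') = k) := by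
            rintro ⟨-, hPk⟩; exact hkk (h2 ▸ hPk)
          simp [this, hkk]
      simp only [this]
      simp
    refine le_trans (W2sq_le_cost _ x _ m π hpos hrow hcol) ?_
    rw [Finset.mul_sum]
    refine le_of_eq (Finset.sum_congr rfl fun i hi => ?_)
    simp only [grp, Finset.mem_filter] at hi
    rw [hπ]
    simp only [hi.2, true_and]
    rw [Finset.sum_eq_single (P i)]
    · simp
    · intro k _ hk
      simp [Ne.symm hk, hk]
    · simp
  -- LOWER BOUND
  have lower : (K:ℝ)⁻¹ * (c * ∑ k, evar (grp P k) x)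
      ≤ ∑ j, W2sq (grp Q j) x Finset.univ b' := by
    -- for each j, the optimal assignment permutation
    have hperm : ∀ j : Fin c, ∃ σ : Equiv.Perm (Fin K),
        (K:ℝ)⁻¹ * ∑ k, ‖x (e j k) - b' (σ k)‖ ^ 2
          ≤ W2sq (grp Q j) x Finset.univ b' := by
      intro j
      -- minimum over permutations
      obtain ⟨σ₀, -, hσ₀⟩ := Finset.exists_mem_eq_inf'
        (s := (Finset.univ : Finset (Equiv.Perm (Fin K)))) ⟨1, Finset.mem_univ _⟩
        (fun σ => ∑ k, ‖x (e j k) - b' (σ k)‖ ^ 2)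
      refine ⟨σ₀, ?_⟩
      refine le_W2sq _ x _ b' (hQne j) hKune _ ?_
      rintro C ⟨π, hpos, hrow, hcol, rfl⟩
      -- the doubly stochastic matrix
      set M : Matrix (Fin K) (Fin K) ℝ := fun k k' => K * π (e j k) k' with hM
      have hMds : M ∈ doublyStochastic ℝ (Fin K) := by
        rw [mem_doublyStochastic_iff_sum]
        refine ⟨fun k k' => by
          have := hpos (e j k) k'
          rw [hM]; dsimp only; positivity, fun k => ?_, fun k' => ?_⟩
        · rw [hM]; dsimp only
          rw [← Finset.mul_sum]
          have : e j k ∈ grp Q j := by simp [grp, (heQ j k).1]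
          rw [hrow (e j k) this, hQcard j, mul_inv_cancel₀ hKr]
        · rw [hM]; dsimp only
          rw [← Finset.mul_sum]
          have : ∑ k, π (e j k) k' = ∑ i ∈ grp Q j, π i k' :=
            (hgrpsum j (fun i => π i k')).symm
          rw [this, hcol k' (Finset.mem_univ _), hKuniv, mul_inv_cancel₀ hKr]
      -- linear functional
      set w : Fin K → Fin K → ℝ := fun k k' => ‖x (e j k) - b' k'‖ ^ 2 with hw
      set f : Matrix (Fin K) (Fin K) ℝ → ℝ := fun M => ∑ k, ∑ k', M k k' * w k k'
        with hf
      have hflin : IsLinearMap ℝ f := by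
        constructor
        · intro A B
          simp only [hf, Matrix.add_apply, add_mul, Finset.sum_add_distrib]
        · intro r A
          simp only [hf, Matrix.smul_apply, smul_eq_mul, Finset.mul_sum, mul_assoc]
      set L : ℝ := ∑ k, ‖x (e j k) - b' (σ₀ k)‖ ^ 2 with hL
      have hhull : M ∈ convexHull ℝ {M' | ∃ σ : Equiv.Perm (Fin K),
          σ.permMatrix ℝ = M'} := by
        rw [← doublyStochastic_eq_convexHull_permMatrix]
        exact hMds
      have hfM : L ≤ f M := by
        have hsub : {M' : Matrix (Fin K) (Fin K) ℝ | ∃ σ : Equiv.Perm (Fin K),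
            σ.permMatrix ℝ = M'} ⊆ {M' | L ≤ f M'} := by
          rintro M' ⟨σ, rfl⟩
          have hfperm : f (σ.permMatrix ℝ) = ∑ k, w k (σ k) := by
            rw [hf]
            refine Finset.sum_congr rfl fun k _ => ?_
            rw [Finset.sum_eq_single (σ k)]
            · simp [Equiv.Perm.permMatrix, PEquiv.toMatrix_apply,
                Equiv.toPEquiv_apply]
            · intro k' _ hk'
              simp [Equiv.Perm.permMatrix, PEquiv.toMatrix_apply,
                Equiv.toPEquiv_apply, Ne.symm hk']
            · simp
          simp only [Set.mem_setOf_eq, hfperm]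
          rw [← hσ₀]
          exact Finset.inf'_le _ (Finset.mem_univ σ)
        have := convexHull_min hsub (convex_halfSpace_ge hflin L) hhull
        exact this
      -- cost = K⁻¹ * f M
      have hcost : ∑ i ∈ grp Q j, ∑ k', π i k' * ‖x i - b' k'‖ ^ 2
          = (K:ℝ)⁻¹ * f M := by
        rw [hgrpsum j (fun i => ∑ k', π i k' * ‖x i - b' k'‖ ^ 2), hf, Finset.mul_sum]
        refine Finset.sum_congr rfl fun k _ => ?_
        rw [Finset.mul_sum]
        refine Finset.sum_congr rfl fun k' _ => ?_
        rw [hM, hw]; dsimp only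
        field_simp
      rw [hcost]
      have h2 : (K:ℝ)⁻¹ * L ≤ (K:ℝ)⁻¹ * f M := by
        apply mul_le_mul_of_nonneg_left hfM
        positivity
      exact h2
    choose σ hσ using hperm
    -- the rebalanced partition
    set P' : Fin N → Fin K := fun i => σ (Q i) (P i) with hP'
    have hP'bal : ∀ k', (grp P' k').card = c := by
      intro k'
      rw [grp, Finset.card_eq_sum_card_fiberwise (f := Q) (t := Finset.univ)
        (fun i _ => Finset.mem_univ _)]
      have : ∀ j, ((Finset.univ.filter (fun i => P' i = k')).filter
          (fun i => Q i = j)).card = 1 := by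
        intro j
        rw [Finset.filter_filter]
        have hiff : ∀ i ∈ (Finset.univ : Finset (Fin N)),
            (P' i = k' ∧ Q i = j) ↔ (Q i = j ∧ P i = (σ j)⁻¹ k') := by
          intro i _
          simp only [hP']
          constructor
          · rintro ⟨h1, h2⟩
            refine ⟨h2, ?_⟩
            rw [← h1, h2]
            simp
          · rintro ⟨h1, h2⟩
            refine ⟨?_, h1⟩
            rw [h1, h2]
            simp
        rw [Finset.filter_congr hiff]
        exact hQ j ((σ j)⁻¹ k')
      simp [this]
    calc (K:ℝ)⁻¹ * (c * ∑ k, evar (grp P k) x)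
        ≤ (K:ℝ)⁻¹ * (c * ∑ k, evar (grp P' k) x) := by
          apply mul_le_mul_of_nonneg_left _ (by positivity)
          apply mul_le_mul_of_nonneg_left (hPopt P' hP'bal) (by positivity)
      _ = (K:ℝ)⁻¹ * ∑ i, ‖x i - emean (grp P' (P' i)) x‖ ^ 2 := by
          rw [hvar P' hP'bal]
      _ ≤ (K:ℝ)⁻¹ * ∑ i, ‖x i - b' (P' i)‖ ^ 2 := by
          apply mul_le_mul_of_nonneg_left _ (by positivity)
          rw [← hfibP P' (fun i => ‖x i - emean (grp P' (P' i)) x‖ ^ 2),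
            ← hfibP P' (fun i => ‖x i - b' (P' i)‖ ^ 2)]
          refine Finset.sum_le_sum fun k _ => ?_
          have h1 : ∀ i ∈ grp P' k, ‖x i - emean (grp P' (P' i)) x‖ ^ 2
              = ‖x i - emean (grp P' k) x‖ ^ 2 := by
            intro i hi
            simp only [grp, Finset.mem_filter] at hi
            rw [hi.2]
          have h2 : ∀ i ∈ grp P' k, ‖x i - b' (P' i)‖ ^ 2
              = ‖x i - b' k‖ ^ 2 := by
            intro i hi
            simp only [grp, Finset.mem_filter] at hi
            rw [hi.2]
          rw [Finset.sum_congr rfl h1, Finset.sum_congr rfl h2]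
          exact sum_sq_emean_le _ x (b' k)
      _ = ∑ j, (K:ℝ)⁻¹ * ∑ k, ‖x (e j k) - b' (σ j k)‖ ^ 2 := by
          rw [← hfibQ (fun i => ‖x i - b' (P' i)‖ ^ 2), Finset.mul_sum]
          refine Finset.sum_congr rfl fun j _ => ?_
          rw [hgrpsum j (fun i => ‖x i - b' (P' i)‖ ^ 2)]
          congr 1
          refine Finset.sum_congr rfl fun k _ => ?_
          rcases heQ j k with ⟨h1, h2⟩
          rw [hP']; dsimp only
          rw [h1, h2]
      _ ≤ ∑ j, W2sq (grp Q j) x Finset.univ b' :=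
          Finset.sum_le_sum fun j _ => hσ j
  exact le_trans upper lower
end

section
/- Let X = {x_1,...,x_N} in R^d with N = K*c, P a partition into K groups of size c, and Q' = Q({T_p}) the partition in Q(P) constructed by matching via the optimal transport maps T_p from the Wasserstein barycenter bar{X}_P to each X_p. Then for every Q in Q(P), the average within-subgroup variance satisfies (1/|Q'|) * sum over q in Q' of Var(X_q) <= (1/|Q|) * sum over q in Q of Var(X_q). -/
open Finset

lemma sum_sq_sub_mean_le {d : ℕ} {ι : Type*} [Fintype ι] (s : Finset ι)
    (x : ι → EuclideanSpace ℝ (Fin d)) (m : EuclideanSpace ℝ (Fin d)) :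
    ∑ i ∈ s, ‖x i - emean s x‖ ^ 2 ≤ ∑ i ∈ s, ‖x i - m‖ ^ 2 := by
  rcases s.eq_empty_or_nonempty with rfl | hs
  · simp
  set μ := emean s x with hμ
  have hcard : (s.card : ℝ) ≠ 0 := Nat.cast_ne_zero.mpr hs.card_ne_zero
  have hsum : ∑ i ∈ s, (x i - μ) = 0 := by
    rw [Finset.sum_sub_distrib, Finset.sum_const, hμ, emean,
      ← Nat.cast_smul_eq_nsmul ℝ, smul_smul,
      mul_inv_cancel₀ hcard, one_smul, sub_self]
  have expand : ∀ i ∈ s, ‖x i - m‖ ^ 2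
      = ‖x i - μ‖ ^ 2 + (2 * inner ℝ (x i - μ) (μ - m) + ‖μ - m‖ ^ 2) := by
    intro i _
    have h : x i - m = (x i - μ) + (μ - m) := by abel
    rw [h, norm_add_sq_real]; ring
  rw [Finset.sum_congr rfl expand, Finset.sum_add_distrib]
  have hz : ∑ i ∈ s, (2 * inner ℝ (x i - μ) (μ - m) + ‖μ - m‖ ^ 2)
      = s.card * ‖μ - m‖ ^ 2 := by
    rw [Finset.sum_add_distrib, ← Finset.mul_sum, ← sum_inner, hsum]
    simp
  rw [hz]
  have hnn : (0:ℝ) ≤ s.card * ‖μ - m‖ ^ 2 := by positivity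
  linarith

lemma W2sq_le {d : ℕ} {ι κ : Type*} [Fintype ι] [Fintype κ]
    {s : Finset ι} {x : ι → EuclideanSpace ℝ (Fin d)}
    {t : Finset κ} {y : κ → EuclideanSpace ℝ (Fin d)}
    (π : ι → κ → ℝ) (h0 : ∀ i j, 0 ≤ π i j)
    (hr : ∀ i ∈ s, ∑ j ∈ t, π i j = (s.card : ℝ)⁻¹)
    (hc : ∀ j ∈ t, ∑ i ∈ s, π i j = (t.card : ℝ)⁻¹) :
    W2sq s x t y ≤ ∑ i ∈ s, ∑ j ∈ t, π i j * ‖x i - y j‖ ^ 2 := by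
  apply csInf_le
  · refine ⟨0, fun C hC => ?_⟩
    obtain ⟨π', hπ0, -, -, rfl⟩ := hC
    exact Finset.sum_nonneg fun i _ => Finset.sum_nonneg fun j _ =>
      mul_nonneg (hπ0 i j) (sq_nonneg _)
  · exact ⟨π, h0, hr, hc, rfl⟩

lemma W2sq_symm {d : ℕ} {ι κ : Type*} [Fintype ι] [Fintype κ]
    (s : Finset ι) (x : ι → EuclideanSpace ℝ (Fin d))
    (t : Finset κ) (y : κ → EuclideanSpace ℝ (Fin d)) :
    W2sq s x t y = W2sq t y s x := by
  unfold W2sq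
  congr 1
  ext C
  constructor <;> rintro ⟨π, h0, hr, hc, rfl⟩
  · refine ⟨fun j i => π i j, fun j i => h0 i j, hc, hr, ?_⟩
    rw [Finset.sum_comm]
    exact Finset.sum_congr rfl fun i _ => Finset.sum_congr rfl fun j _ => by
      rw [norm_sub_rev]
  · refine ⟨fun j i => π i j, fun j i => h0 i j, hc, hr, ?_⟩
    rw [Finset.sum_comm]
    exact Finset.sum_congr rfl fun i _ => Finset.sum_congr rfl fun j _ => by
      rw [norm_sub_rev]

lemma selection_sigma {N K c : ℕ} {P : Fin N → Fin K} {Q : Fin N → Fin c}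
    (hQ : Selection P Q) :
    ∃ σ : Fin K → Fin c → Fin N,
      (∀ p j, P (σ p j) = p) ∧ (∀ p j, Q (σ p j) = j) ∧
      (∀ j, grp Q j = Finset.image (fun p => σ p j) Finset.univ) := by
  choose σ hσ using fun (k : Fin K) (j : Fin c) => Finset.card_eq_one.mp (hQ j k)
  have hmem : ∀ k j, Q (σ k j) = j ∧ P (σ k j) = k := by
    intro k j
    have : σ k j ∈ Finset.univ.filter (fun i => Q i = j ∧ P i = k) := by
      rw [hσ k j]; exact Finset.mem_singleton_self _
    exact (Finset.mem_filter.mp this).2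
  refine ⟨σ, fun p j => (hmem p j).2, fun p j => (hmem p j).1, fun j => ?_⟩
  ext i
  simp only [grp, Finset.mem_filter, Finset.mem_univ, true_and, Finset.mem_image]
  constructor
  · intro hi
    have : i ∈ Finset.univ.filter (fun i' => Q i' = j ∧ P i' = P i) := by
      simp only [Finset.mem_filter, Finset.mem_univ, true_and]
      exact ⟨hi, trivial⟩
    rw [hσ (P i) j] at this
    exact ⟨P i, (Finset.mem_singleton.mp this).symm⟩
  · rintro ⟨p, rfl⟩
    exact (hmem p j).1

lemma W2sq_le_matching {d N K c : ℕ} {x : Fin N → EuclideanSpace ℝ (Fin d)}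
    {P : Fin N → Fin K} (hPbal : ∀ k, (grp P k).card = c)
    {σ : Fin K → Fin c → Fin N} (hσP : ∀ p j, P (σ p j) = p)
    (hσinj : ∀ p, Function.Injective (σ p))
    (μ : Fin c → EuclideanSpace ℝ (Fin d)) (p : Fin K) :
    W2sq (grp P p) x Finset.univ μ ≤ (c : ℝ)⁻¹ * ∑ j, ‖x (σ p j) - μ j‖ ^ 2 := by
  have hmem : ∀ j, σ p j ∈ grp P p := fun j =>
    Finset.mem_filter.mpr ⟨Finset.mem_univ _, hσP p j⟩
  have himg : Finset.image (σ p) Finset.univ = grp P p := by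
    apply Finset.eq_of_subset_of_card_le
    · intro i hi
      obtain ⟨j, -, rfl⟩ := Finset.mem_image.mp hi
      exact hmem j
    · rw [Finset.card_image_of_injective _ (hσinj p), card_univ, Fintype.card_fin,
        hPbal p]
  set π : Fin N → Fin c → ℝ := fun i j => if i = σ p j then (c : ℝ)⁻¹ else 0 with hπ
  have h0 : ∀ i j, 0 ≤ π i j := fun i j => by
    dsimp only [π]; split <;> positivity
  have hr : ∀ i ∈ grp P p, ∑ j, π i j = (((grp P p).card : ℝ))⁻¹ := by
    intro i hi
    rw [← himg] at hi
    obtain ⟨j₀, -, rfl⟩ := Finset.mem_image.mp hi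
    have key : ∀ j, π (σ p j₀) j = if j = j₀ then (c : ℝ)⁻¹ else 0 := by
      intro j
      dsimp only [π]
      by_cases h : j = j₀
      · subst h; simp
      · rw [if_neg h, if_neg]
        intro he
        exact h ((hσinj p) he).symm
    rw [Finset.sum_congr rfl fun j _ => key j,
      Finset.sum_ite_eq' Finset.univ j₀ (fun _ => (c : ℝ)⁻¹),
      if_pos (Finset.mem_univ _), hPbal p]
  have hcl : ∀ j ∈ (Finset.univ : Finset (Fin c)), ∑ i ∈ grp P p, π i j
      = (((Finset.univ : Finset (Fin c)).card : ℝ))⁻¹ := by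
    intro j _
    rw [card_univ, Fintype.card_fin]
    dsimp only [π]
    rw [Finset.sum_ite_eq' (grp P p) (σ p j) (fun _ => (c : ℝ)⁻¹), if_pos (hmem j)]
  refine le_trans (W2sq_le π h0 hr hcl) (le_of_eq ?_)
  rw [Finset.sum_comm, Finset.mul_sum]
  apply Finset.sum_congr rfl
  intro j _
  have key : ∀ i, π i j * ‖x i - μ j‖ ^ 2
      = if i = σ p j then (c : ℝ)⁻¹ * ‖x i - μ j‖ ^ 2 else 0 := by
    intro i; dsimp only [π]; split <;> simp
  rw [Finset.sum_congr rfl fun i _ => key i,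
    Finset.sum_ite_eq' (grp P p) (σ p j) (fun i => (c : ℝ)⁻¹ * ‖x i - μ j‖ ^ 2),
    if_pos (hmem j)]

/-- the selection partition `Q'` constructed by matching along optimal
transport maps `T_p` from the Wasserstein barycenter `bar X_P` to each group measure `X_p`
minimizes the average within-subgroup variance among all selection partitions `Q ∈ Q(P)`. -/
theorem matching_minimizes_average_within_variance {d N K c : ℕ}
    (hK : 0 < K) (hc : 0 < c) (hN : N = K * c)
    (x : Fin N → EuclideanSpace ℝ (Fin d)) (P : Fin N → Fin K)
    (hPbal : ∀ k, (grp P k).card = c)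
    (b : Fin c → EuclideanSpace ℝ (Fin d)) (hb : IsBary x P b)
    (T : Fin K → Fin c → Fin N)
    (hTmem : ∀ p j, P (T p j) = p)
    (hTinj : ∀ p, Function.Injective (T p))
    (hTopt : ∀ p, (c : ℝ)⁻¹ * ∑ j, ‖b j - x (T p j)‖ ^ 2
      = W2sq Finset.univ b (grp P p) x)
    (Q' : Fin N → Fin c) (hQT : ∀ p j, Q' (T p j) = j) :
    ∀ Q : Fin N → Fin c, Selection P Q →
      (c : ℝ)⁻¹ * ∑ j, evar (grp Q' j) x ≤ (c : ℝ)⁻¹ * ∑ j, evar (grp Q j) x := by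
  intro Q hQSel
  obtain ⟨σ, hσP, hσQ, hσgrp⟩ := selection_sigma hQSel
  have hcne : (c : ℝ) ≠ 0 := Nat.cast_ne_zero.mpr hc.ne'
  have hKinv : (0:ℝ) ≤ (K:ℝ)⁻¹ := by positivity
  -- structure of Q'
  have hTimg : ∀ p, Finset.image (T p) Finset.univ = grp P p := by
    intro p
    apply Finset.eq_of_subset_of_card_le
    · intro i hi
      obtain ⟨j, -, rfl⟩ := Finset.mem_image.mp hi
      exact Finset.mem_filter.mpr ⟨Finset.mem_univ _, hTmem p j⟩
    · rw [Finset.card_image_of_injective _ (hTinj p), card_univ, Fintype.card_fin,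
        hPbal p]
  have hgrpQ' : ∀ j, grp Q' j = Finset.image (fun p => T p j) Finset.univ := by
    intro j
    ext i
    simp only [grp, Finset.mem_filter, Finset.mem_univ, true_and, Finset.mem_image]
    constructor
    · intro hi
      have him : i ∈ grp P (P i) := Finset.mem_filter.mpr ⟨Finset.mem_univ _, rfl⟩
      rw [← hTimg (P i)] at him
      obtain ⟨j', -, hj'⟩ := Finset.mem_image.mp him
      have hjj : j' = j := by
        rw [← hj', hQT (P i) j'] at hi
        exact hi
      exact ⟨P i, by rw [← hjj, hj']⟩
    · rintro ⟨p, rfl⟩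
      exact hQT p j
  -- injectivity in p
  have hσpinj : ∀ j, Function.Injective (fun p => σ p j) := by
    intro j a b' h
    have := congrArg P h
    simpa [hσP] using this
  have hTpinj : ∀ j, Function.Injective (fun p => T p j) := by
    intro j a b' h
    have := congrArg P h
    simpa [hTmem] using this
  -- injectivity in j for σ
  have hσjinj : ∀ p, Function.Injective (σ p) := by
    intro p a b' h
    have := congrArg Q h
    simpa [hσQ] using this
  -- sums over groups
  have hsumQ : ∀ (j : Fin c) (f : Fin N → ℝ),
      ∑ i ∈ grp Q j, f i = ∑ p, f (σ p j) := by
    intro j f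
    rw [hσgrp j]
    exact Finset.sum_image fun a _ b' _ h => hσpinj j h
  have hsumQ' : ∀ (j : Fin c) (f : Fin N → ℝ),
      ∑ i ∈ grp Q' j, f i = ∑ p, f (T p j) := by
    intro j f
    rw [hgrpQ' j]
    exact Finset.sum_image fun a _ b' _ h => hTpinj j h
  have hcardQ : ∀ j, (((grp Q j).card : ℝ)) = K := by
    intro j
    rw [hσgrp j, Finset.card_image_of_injective _ (hσpinj j), card_univ,
      Fintype.card_fin]
  have hcardQ' : ∀ j, (((grp Q' j).card : ℝ)) = K := by
    intro j
    rw [hgrpQ' j, Finset.card_image_of_injective _ (hTpinj j), card_univ,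
      Fintype.card_fin]
  have hevarQ : ∀ j, evar (grp Q j) x
      = (K:ℝ)⁻¹ * ∑ p, ‖x (σ p j) - emean (grp Q j) x‖ ^ 2 := by
    intro j
    rw [evar, hcardQ j, hsumQ j (fun i => ‖x i - emean (grp Q j) x‖ ^ 2)]
  have hevarQ' : ∀ j, evar (grp Q' j) x
      = (K:ℝ)⁻¹ * ∑ p, ‖x (T p j) - emean (grp Q' j) x‖ ^ 2 := by
    intro j
    rw [evar, hcardQ' j, hsumQ' j (fun i => ‖x i - emean (grp Q' j) x‖ ^ 2)]
  -- key inequalities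
  have h1 : ∀ j, ∑ p, ‖x (T p j) - emean (grp Q' j) x‖ ^ 2
      ≤ ∑ p, ‖x (T p j) - b j‖ ^ 2 := by
    intro j
    have h := sum_sq_sub_mean_le (grp Q' j) x (b j)
    rwa [hsumQ' j (fun i => ‖x i - emean (grp Q' j) x‖ ^ 2),
      hsumQ' j (fun i => ‖x i - b j‖ ^ 2)] at h
  have h2 : ∀ p, ∑ j, ‖x (T p j) - b j‖ ^ 2
      = c * W2sq (grp P p) x Finset.univ b := by
    intro p
    have hS : ∑ j, ‖x (T p j) - b j‖ ^ 2 = ∑ j, ‖b j - x (T p j)‖ ^ 2 :=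
      Finset.sum_congr rfl fun j _ => by rw [norm_sub_rev]
    rw [hS, ← W2sq_symm, ← hTopt p, ← mul_assoc, mul_inv_cancel₀ hcne, one_mul]
  have h3 : ∑ p, W2sq (grp P p) x Finset.univ b
      ≤ ∑ p, W2sq (grp P p) x Finset.univ (fun j => emean (grp Q j) x) :=
    hb _
  have h4 : ∀ p, W2sq (grp P p) x Finset.univ (fun j => emean (grp Q j) x)
      ≤ (c:ℝ)⁻¹ * ∑ j, ‖x (σ p j) - emean (grp Q j) x‖ ^ 2 :=
    fun p => W2sq_le_matching hPbal hσP hσjinj _ p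
  -- assemble
  apply mul_le_mul_of_nonneg_left _ (by positivity : (0:ℝ) ≤ (c:ℝ)⁻¹)
  calc ∑ j, evar (grp Q' j) x
      = (K:ℝ)⁻¹ * ∑ j, ∑ p, ‖x (T p j) - emean (grp Q' j) x‖ ^ 2 := by
        rw [Finset.mul_sum]
        exact Finset.sum_congr rfl fun j _ => hevarQ' j
    _ ≤ (K:ℝ)⁻¹ * ∑ j, ∑ p, ‖x (T p j) - b j‖ ^ 2 :=
        mul_le_mul_of_nonneg_left (Finset.sum_le_sum fun j _ => h1 j) hKinv
    _ = (K:ℝ)⁻¹ * ∑ p, ∑ j, ‖x (T p j) - b j‖ ^ 2 := by rw [Finset.sum_comm]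
    _ = (K:ℝ)⁻¹ * ∑ p, c * W2sq (grp P p) x Finset.univ b := by
        rw [Finset.sum_congr rfl fun p _ => h2 p]
    _ = (K:ℝ)⁻¹ * (c * ∑ p, W2sq (grp P p) x Finset.univ b) := by
        rw [← Finset.mul_sum]
    _ ≤ (K:ℝ)⁻¹ * (c * ∑ p, W2sq (grp P p) x Finset.univ
          (fun j => emean (grp Q j) x)) :=
        mul_le_mul_of_nonneg_left
          (mul_le_mul_of_nonneg_left h3 (by positivity)) hKinv
    _ ≤ (K:ℝ)⁻¹ * (c * ∑ p, (c:ℝ)⁻¹ * ∑ j, ‖x (σ p j) - emean (grp Q j) x‖ ^ 2) :=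
        mul_le_mul_of_nonneg_left
          (mul_le_mul_of_nonneg_left (Finset.sum_le_sum fun p _ => h4 p)
            (by positivity)) hKinv
    _ = (K:ℝ)⁻¹ * ∑ p, ∑ j, ‖x (σ p j) - emean (grp Q j) x‖ ^ 2 := by
        rw [← Finset.mul_sum, ← mul_assoc (c:ℝ), mul_inv_cancel₀ hcne, one_mul]
    _ = (K:ℝ)⁻¹ * ∑ j, ∑ p, ‖x (σ p j) - emean (grp Q j) x‖ ^ 2 := by
        rw [Finset.sum_comm]
    _ = ∑ j, evar (grp Q j) x := by
        rw [Finset.mul_sum]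
        exact Finset.sum_congr rfl fun j _ => (hevarQ j).symm
end
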